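/- Let r ≥ 1 be an integer. For all sufficiently large n, the maximum number of edges in a non-bipartite B_{r+1}-free simple graph on n vertices equals ⌊(n−1)²/4⌋ + 2r. -/

import Mathlib

open SimpleGraph Set

/-- `G` contains no book `B_{r+1}`, i.e. no two adjacent vertices of `G` have at least
`r + 1` common neighbours. -/
def BookFree {V : Type*} (r : ℕ) (G : SimpleGraph V) : Prop :=
  ∀ u v : V, G.Adj u v → ({w : V | G.Adj u w ∧ G.Adj v w}).ncard ≤ r

open Finset
set_option linter.unusedSectionVars false
set_option linter.unusedVariables false
set_option maxHeartbeats 1000000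


namespace BookProof

variable {V : Type*} [DecidableEq V] (G : SimpleGraph V) [DecidableRel G.Adj]

/-- neighbours of `v` inside `s` -/
def nbr (s : Finset V) (v : V) : Finset V := s.filter (fun w => G.Adj v w)

/-- number of ordered adjacent pairs in `t × u` -/
def ecnt (t u : Finset V) : ℕ := ∑ v ∈ t, ∑ w ∈ u, (if G.Adj v w then 1 else 0)

/-- doubled edge count inside `s` -/
def DD (s : Finset V) : ℕ := ecnt G s s

variable {G}

lemma nbr_subset {s : Finset V} {v : V} : nbr G s v ⊆ s := filter_subset _ _

lemma card_nbr_le {s : Finset V} (v : V) : (nbr G s v).card ≤ s.card :=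
  card_le_card nbr_subset

lemma mem_nbr {s : Finset V} {v w : V} : w ∈ nbr G s v ↔ w ∈ s ∧ G.Adj v w := by
  simp [nbr]

lemma inner_sum (u : Finset V) (v : V) :
    (∑ w ∈ u, (if G.Adj v w then 1 else 0)) = (nbr G u v).card :=
  (Finset.card_filter _ _).symm

lemma ecnt_eq_sum (t u : Finset V) : ecnt G t u = ∑ v ∈ t, (nbr G u v).card := by
  unfold ecnt; exact Finset.sum_congr rfl fun v _ => inner_sum u v

lemma ecnt_comm (t u : Finset V) : ecnt G t u = ecnt G u t := by
  unfold ecnt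
  rw [Finset.sum_comm]
  refine Finset.sum_congr rfl fun v _ => Finset.sum_congr rfl fun w _ => ?_
  simp [SimpleGraph.adj_comm]

lemma ecnt_union_left {A B : Finset V} (u : Finset V) (h : Disjoint A B) :
    ecnt G (A ∪ B) u = ecnt G A u + ecnt G B u := Finset.sum_union h

lemma ecnt_le (t u : Finset V) : ecnt G t u ≤ t.card * u.card := by
  rw [ecnt_eq_sum]
  calc ∑ v ∈ t, (nbr G u v).card ≤ ∑ _v ∈ t, u.card :=
        Finset.sum_le_sum fun v _ => card_nbr_le v
    _ = t.card * u.card := by rw [Finset.sum_const, smul_eq_mul]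

lemma ecnt_union_right (t : Finset V) {A B : Finset V} (h : Disjoint A B) :
    ecnt G t (A ∪ B) = ecnt G t A + ecnt G t B := by
  unfold ecnt
  rw [← Finset.sum_add_distrib]
  exact Finset.sum_congr rfl fun v _ => Finset.sum_union h

lemma DD_split {t s : Finset V} (h : t ⊆ s) :
    DD G s = DD G (s \ t) + 2 * ecnt G t (s \ t) + DD G t := by
  have hd : Disjoint (s \ t) t := sdiff_disjoint
  have hs : (s \ t) ∪ t = s := sdiff_union_of_subset h
  unfold DD
  conv_lhs => rw [← hs]
  rw [ecnt_union_left _ hd, ecnt_union_right _ hd, ecnt_union_right _ hd,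
    ecnt_comm (G := G) (s \ t) t]
  ring

lemma DD_le_sq (s : Finset V) : DD G s ≤ s.card * s.card := ecnt_le s s

/-- arithmetic helper : `m ≥ 2 → m^2/4 = (m-2)^2/4 + (m-1)` -/
lemma quarter_step {m : ℕ} (h : 2 ≤ m) : m^2/4 = (m-2)^2/4 + (m-1) := by
  obtain ⟨k, rfl⟩ : ∃ k, m = k + 2 := ⟨m - 2, by omega⟩
  have : (k+2)^2 = k^2 + (k+1) * 4 := by ring
  rw [this, Nat.add_mul_div_right _ _ (by norm_num)]
  simp

/-- no triangle with all vertices in s -/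
def TriFreeOn (s : Finset V) : Prop :=
  ∀ x ∈ s, ∀ y ∈ s, ∀ z ∈ s, G.Adj x y → G.Adj y z → ¬ G.Adj x z

lemma TriFreeOn.mono {s t : Finset V} (h : TriFreeOn (G := G) s) (hts : t ⊆ s) :
    TriFreeOn (G := G) t := fun x hx y hy z hz => h x (hts hx) y (hts hy) z (hts hz)

lemma DD_eq_zero {s : Finset V} (h : ∀ x ∈ s, ∀ y ∈ s, ¬ G.Adj x y) : DD G s = 0 := by
  unfold DD ecnt
  refine Finset.sum_eq_zero fun v hv => Finset.sum_eq_zero fun w hw => ?_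
  simp [h v hv w hw]

lemma exists_edge_of_DD_pos {s : Finset V} (h : 0 < DD G s) :
    ∃ x ∈ s, ∃ y ∈ s, G.Adj x y := by
  by_contra hc
  push_neg at hc
  rw [DD_eq_zero (fun x hx y hy => hc x hx y hy)] at h
  omega

/-- Mantel's theorem on a subset, doubled form. -/
lemma mantel_on : ∀ (k : ℕ) (s : Finset V), s.card ≤ k → TriFreeOn (G := G) s →
    DD G s ≤ 2 * (s.card^2/4) := by
  intro k
  induction k with
  | zero =>
    intro s hs _
    have hse : s = ∅ := by rw [← Finset.card_eq_zero]; omega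
    subst hse
    rw [DD_eq_zero (by simp)]
    simp
  | succ k ih =>
    intro s hs htf
    rcases Nat.eq_zero_or_pos (DD G s) with h0 | hpos
    · omega
    obtain ⟨x, hx, y, hy, hxy⟩ := exists_edge_of_DD_pos hpos
    have hne : x ≠ y := G.ne_of_adj hxy
    set t : Finset V := {x, y} with ht
    have hts : t ⊆ s := by
      intro a ha; rw [ht] at ha; simp at ha; rcases ha with rfl|rfl <;> assumption
    have htcard : t.card = 2 := by rw [ht]; rw [Finset.card_insert_of_notMem (by simp [hne])]; simp
    have hm2 : 2 ≤ s.card := htcard ▸ card_le_card hts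
    have hsplit := DD_split (G := G) hts
    -- DD t ≤ 2
    have hDDt : DD G t ≤ 2 := by
      rw [ht]
      unfold DD ecnt
      rw [Finset.sum_insert (by simp [hne]), Finset.sum_singleton,
        Finset.sum_insert (by simp [hne]), Finset.sum_singleton,
        Finset.sum_insert (by simp [hne]), Finset.sum_singleton]
      simp only [SimpleGraph.irrefl, if_false]
      split <;> split <;> omega
    -- cross bound
    have hcross : ecnt G t (s \ t) ≤ s.card - 2 := by
      rw [ecnt_eq_sum]
      have : ∑ v ∈ t, (nbr G (s \ t) v).card = (nbr G (s \ t) x).card + (nbr G (s \ t) y).card := by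
        rw [ht, Finset.sum_insert (by simp [hne]), Finset.sum_singleton]
      rw [this]
      -- disjointness of the two neighbourhoods (triangle-freeness)
      have hdisj : Disjoint (nbr G (s \ t) x) (nbr G (s \ t) y) := by
        rw [Finset.disjoint_left]
        intro w hwx hwy
        rw [mem_nbr] at hwx hwy
        exact htf x hx w ((Finset.sdiff_subset) hwx.1) y hy hwx.2 (G.adj_symm hwy.2) hxy
      have hsub : nbr G (s \ t) x ∪ nbr G (s \ t) y ⊆ s \ t :=
        Finset.union_subset nbr_subset nbr_subset
      have := Finset.card_union_of_disjoint hdisj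
      have h2 := Finset.card_le_card hsub
      have h3 : (s \ t).card = s.card - 2 := by
        rw [Finset.card_sdiff_of_subset hts, htcard]
      omega
    have hrec : DD G (s \ t) ≤ 2 * ((s.card - 2)^2/4) := by
      have hc : (s \ t).card = s.card - 2 := by rw [Finset.card_sdiff_of_subset hts, htcard]
      have := ih (s \ t) (by omega) (htf.mono (Finset.sdiff_subset))
      rw [hc] at this; exact this
    have harith := quarter_step hm2
    omega



lemma quarter_step1 {m : ℕ} (h : 1 ≤ m) : m^2/4 = (m-1)^2/4 + m/2 := by
  obtain ⟨t, rfl | rfl⟩ := Nat.even_or_odd' m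
  · obtain ⟨u, rfl⟩ : ∃ u, t = u + 1 := ⟨t-1, by omega⟩
    have h1 : (2*(u+1))^2 = 4*((u+1)*(u+1)) := by ring
    have h2 : (2*(u+1)) - 1 = 2*u+1 := by omega
    have h3 : (2*u+1)^2 = 4*(u*u+u) + 1 := by ring
    rw [h1, h2, h3, Nat.mul_div_cancel_left _ (by norm_num : 0 < 4),
      Nat.mul_add_div (by norm_num : 0 < 4)]
    have h4 : (u+1)*(u+1) = u*u + u + (u+1) := by ring
    omega
  · have h1 : (2*t+1)^2 = 4*(t*t+t) + 1 := by ring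
    have h2 : (2*t+1) - 1 = 2*t := by omega
    have h3 : (2*t)^2 = 4*(t*t) := by ring
    rw [h1, h2, h3, Nat.mul_div_cancel_left _ (by norm_num : 0 < 4),
      Nat.mul_add_div (by norm_num : 0 < 4)]
    omega

lemma prod_le_quarter (a b : ℕ) : a * b ≤ (a+b)^2/4 := by
  rcases le_total a b with hab | hab
  · have h1 : (a+b)^2 = 4*(a*b) + (b-a)^2 := by
      have : b - a + a = b := by omega
      nlinarith [Nat.sub_add_cancel hab]
    rw [h1, Nat.mul_add_div (by norm_num : 0 < 4)]
    omega
  · have h1 : (a+b)^2 = 4*(a*b) + (a-b)^2 := by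
      nlinarith [Nat.sub_add_cancel hab]
    rw [h1, Nat.mul_add_div (by norm_num : 0 < 4)]
    omega

/-- arithmetic for the odd-cycle case -/
lemma cycle_arith {a k : ℕ} (hk : 2 ≤ k) (ha : 2*k ≤ a) :
    (a-2*k)^2/4 + 2*(a-2*k) + (2*k+1) ≤ a^2/4 + 1 := by
  obtain ⟨x, rfl⟩ : ∃ x, a = x + 2*k := ⟨a - 2*k, by omega⟩
  have h1 : (x+2*k)^2 = x^2 + 4*(k*(x+k)) := by ring
  have h2 : x + 2*k - 2*k = x := by omega
  rw [h1, h2, Nat.add_mul_div_left _ _ (by norm_num : 0 < 4)]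
  have h3 : 2*(x+k) ≤ k*(x+k) := Nat.mul_le_mul_right _ hk
  omega

/-- large minimum degree plus small books forces triangle-freeness -/
lemma trifree_of_min_deg {r : ℕ}
    (hbk : ∀ u v, G.Adj u v → ∀ s : Finset V, ((nbr G s u) ∩ (nbr G s v)).card ≤ r)
    {s : Finset V} (hmin : ∀ v ∈ s, s.card + 3*r + 2 ≤ 3 * (nbr G s v).card) :
    TriFreeOn (G := G) s := by
  intro x hx y hy z hz hxy hyz hxz
  set A : Finset V := nbr G s x with hA
  set B : Finset V := (s \ A) \ {x} with hB
  have hAs : A ⊆ s := nbr_subset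
  have hxA : x ∉ A := by rw [hA, mem_nbr]; rintro ⟨-, h⟩; exact G.irrefl h
  have hBcard : B.card = s.card - A.card - 1 := by
    rw [hB]
    rw [Finset.sdiff_singleton_eq_erase, Finset.card_erase_of_mem (by
      rw [Finset.mem_sdiff]; exact ⟨hx, hxA⟩), Finset.card_sdiff_of_subset hAs]
  -- the key degree lower bounds in B
  have key : ∀ w, w ∈ s → G.Adj x w → ∀ hws : G.Adj w x,
      (nbr G s w).card ≤ (nbr G B w).card + r + 1 := by
    intro w hw hxw hwx
    have hsub : nbr G s w ⊆ nbr G B w ∪ (A ∩ nbr G s w) ∪ {x} := by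
      intro u hu
      rw [mem_nbr] at hu
      simp only [Finset.mem_union, Finset.mem_inter, Finset.mem_singleton]
      by_cases hu1 : u = x
      · tauto
      by_cases hu2 : u ∈ A
      · exact Or.inl <| Or.inr ⟨hu2, by rw [mem_nbr]; exact hu⟩
      · refine Or.inl <| Or.inl ?_
        rw [mem_nbr]
        refine ⟨?_, hu.2⟩
        rw [hB]
        simp only [Finset.mem_sdiff, Finset.mem_singleton]
        exact ⟨⟨hu.1, hu2⟩, hu1⟩
    have h1 := Finset.card_le_card hsub
    have h2 := Finset.card_union_le (nbr G B w ∪ (A ∩ nbr G s w)) ({x} : Finset V)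
    have h3 := Finset.card_union_le (nbr G B w) (A ∩ nbr G s w)
    have h4 : (A ∩ nbr G s w).card ≤ r := by
      have := hbk x w hxw s
      rw [← hA] at this
      exact this
    simp only [Finset.card_singleton] at h2
    omega
  have hyb := key y hy hxy (G.adj_symm hxy)
  have hzb := key z hz hxz (G.adj_symm hxz)
  -- common neighbours of y,z in B
  have hUcap : (nbr G B y).card + (nbr G B z).card
      = (nbr G B y ∪ nbr G B z).card + (nbr G B y ∩ nbr G B z).card :=
    (Finset.card_union_add_card_inter _ _).symm
  have hUB : (nbr G B y ∪ nbr G B z).card ≤ B.card :=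
    Finset.card_le_card (Finset.union_subset nbr_subset nbr_subset)
  have hsubcap : (nbr G B y ∩ nbr G B z) ⊆ (nbr G s y ∩ nbr G s z) := by
    intro u hu
    rw [Finset.mem_inter, mem_nbr, mem_nbr] at hu ⊢
    have hBs : B ⊆ s := by rw [hB]; exact (Finset.sdiff_subset).trans Finset.sdiff_subset
    exact ⟨⟨hBs hu.1.1, hu.1.2⟩, hBs hu.2.1, hu.2.2⟩
  have hcapr : (nbr G s y ∩ nbr G s z).card ≤ r := hbk y z hyz s
  have hcap := Finset.card_le_card hsubcap
  have hdx := hmin x hx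
  have hdy := hmin y hy
  have hdz := hmin z hz
  rw [← hA] at hdx
  have hstep1 : (nbr G B y).card + (nbr G B z).card ≤ B.card + (nbr G B y ∩ nbr G B z).card := by
    omega
  have hstep2 : (nbr G s y).card + (nbr G s z).card ≤ (nbr G B y).card + (nbr G B z).card + 2*r + 2 := by
    omega
  have hAcard : s.card + 3*r + 2 ≤ 3 * A.card := hdx
  have hAle : A.card + 1 ≤ s.card := by
    have : A ⊆ s.erase x := by
      intro u hu
      rw [Finset.mem_erase]
      rw [hA, mem_nbr] at hu
      exact ⟨fun h => G.irrefl (h ▸ hu.2), hu.1⟩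
    have h5 := Finset.card_le_card this
    rw [Finset.card_erase_of_mem hx] at h5
    have : 1 ≤ s.card := Finset.card_pos.mpr ⟨x, hx⟩
    omega
  omega

/-- Turán-type bound with constant slack for book-free graphs -/
lemma eprime {r : ℕ}
    (hbk : ∀ u v, G.Adj u v → ∀ s : Finset V, ((nbr G s u) ∩ (nbr G s v)).card ≤ r) :
    ∀ (k : ℕ) (s : Finset V), s.card ≤ k → DD G s ≤ 2 * (s.card^2/4 + (6*r+6)^2) := by
  intro k
  induction k with
  | zero =>
    intro s hs
    have : s = ∅ := by rw [← Finset.card_eq_zero]; omega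
    subst this
    simp [DD, ecnt]
  | succ k ih =>
    intro s hs
    by_cases hsmall : s.card ≤ 6*r+6
    · have h1 := DD_le_sq (G := G) s
      have h2 : s.card * s.card ≤ (6*r+6)*(6*r+6) := Nat.mul_le_mul hsmall hsmall
      have h3 : (6*r+6)^2 = (6*r+6)*(6*r+6) := by ring
      omega
    by_cases hdeg : ∃ v ∈ s, 3 * (nbr G s v).card < s.card + 3*r + 2
    · obtain ⟨v, hv, hdv⟩ := hdeg
      have hts : {v} ⊆ s := Finset.singleton_subset_iff.mpr hv
      have hsplit := DD_split (G := G) hts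
      have hDDv : DD G ({v} : Finset V) = 0 := by
        simp [DD, ecnt, Finset.filter_singleton]
      have hecnt : ecnt G {v} (s \ {v}) ≤ (nbr G s v).card := by
        rw [ecnt_eq_sum, Finset.sum_singleton]
        exact Finset.card_le_card (fun w hw => by
          rw [mem_nbr] at hw ⊢; exact ⟨(Finset.sdiff_subset) hw.1, hw.2⟩)
      have hcard : (s \ {v}).card = s.card - 1 := by
        rw [Finset.card_sdiff_of_subset hts, Finset.card_singleton]
      have hrec := ih (s \ {v}) (by omega)
      rw [hcard] at hrec
      have harith := quarter_step1 (m := s.card) (by omega)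
      omega
    · push_neg at hdeg
      have htf := trifree_of_min_deg hbk (s := s) (fun v hv => hdeg v hv)
      have := mantel_on (G := G) s.card s le_rfl htf
      omega


section Walks
variable (G)

/-- a walk of length `k` staying inside `s` -/
def IsWalkOn (s : Finset V) (c : ℕ → V) (k : ℕ) : Prop :=
  (∀ i ≤ k, c i ∈ s) ∧ ∀ i < k, G.Adj (c i) (c (i+1))

/-- reachability by a walk of given length -/
def Rp (s : Finset V) (u v : V) (k : ℕ) : Prop :=
  ∃ c, IsWalkOn G s c k ∧ c 0 = u ∧ c k = v

variable {G}

lemma Rp.refl {s : Finset V} {u : V} (hu : u ∈ s) : Rp G s u u 0 :=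
  ⟨fun _ => u, ⟨fun _ _ => hu, fun i hi => by omega⟩, rfl, rfl⟩

lemma Rp.edge {s : Finset V} {u v : V} (h : G.Adj u v) (hu : u ∈ s) (hv : v ∈ s) :
    Rp G s u v 1 := by
  refine ⟨fun i => if i = 0 then u else v, ⟨fun i _ => ?_, fun i hi => ?_⟩, by simp, by simp⟩
  · dsimp only; split <;> assumption
  · have : i = 0 := by omega
    subst this; simpa using h

lemma Rp.symm {s : Finset V} {u v : V} {k : ℕ} (h : Rp G s u v k) : Rp G s v u k := by
  obtain ⟨c, ⟨hmem, hadj⟩, h0, hk⟩ := h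
  refine ⟨fun i => c (k - i), ⟨fun i hi => hmem _ (by omega), fun i hi => ?_⟩, by simp [hk], by simp [h0]⟩
  show G.Adj (c (k - i)) (c (k - (i+1)))
  have h1 : k - i = (k - (i+1)) + 1 := by omega
  rw [h1]
  exact (hadj (k - (i+1)) (by omega)).symm

lemma Rp.trans {s : Finset V} {u v w : V} {k l : ℕ} (h1 : Rp G s u v k) (h2 : Rp G s v w l) :
    Rp G s u w (k + l) := by
  obtain ⟨c, ⟨hcm, hca⟩, hc0, hck⟩ := h1
  obtain ⟨d, ⟨hdm, hda⟩, hd0, hdl⟩ := h2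
  refine ⟨fun i => if i ≤ k then c i else d (i - k), ⟨fun i hi => ?_, fun i hi => ?_⟩, ?_, ?_⟩
  · dsimp only; split
    · exact hcm _ (by omega)
    · exact hdm _ (by omega)
  · dsimp only
    rcases lt_trichotomy i k with h | h | h
    · rw [if_pos (by omega), if_pos (by omega)]; exact hca i h
    · subst h
      rw [if_pos le_rfl, if_neg (by omega)]
      have : i + 1 - i = 1 := by omega
      rw [this]
      have h0' : d 0 = c i := hd0.trans hck.symm
      have := hda 0 (by omega)
      rwa [h0'] at this
    · rw [if_neg (by omega), if_neg (by omega)]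
      have h1 : i - k + 1 = i + 1 - k := by omega
      exact h1 ▸ hda (i - k) (by omega)
  · simp [hc0]
  · dsimp only
    rcases Nat.eq_zero_or_pos l with rfl | hl
    · rw [if_pos (by omega)]; rw [Nat.add_zero, hck, ← hd0, hdl]
    · rw [if_neg (by omega)]
      have : k + l - k = l := by omega
      rw [this, hdl]

lemma Rp.mem_right {s : Finset V} {u v : V} {k : ℕ} (h : Rp G s u v k) : v ∈ s := by
  obtain ⟨c, ⟨hcm, _⟩, _, hck⟩ := h
  exact hck ▸ hcm k le_rfl

lemma Rp.mono {s t : Finset V} {u v : V} {k : ℕ} (hst : s ⊆ t) (h : Rp G s u v k) :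
    Rp G t u v k := by
  obtain ⟨c, ⟨hcm, hca⟩, h0, hk⟩ := h
  exact ⟨c, ⟨fun i hi => hst (hcm i hi), hca⟩, h0, hk⟩

/-- arcs of a closed walk -/
lemma Rp.arc {s : Finset V} {c : ℕ → V} {k : ℕ} (hw : IsWalkOn G s c k)
    {i j : ℕ} (hij : i ≤ j) (hj : j ≤ k) : Rp G s (c i) (c j) (j - i) := by
  refine ⟨fun t => c (i + t), ⟨fun t ht => hw.1 _ (by omega), fun t ht => ?_⟩, ?_, ?_⟩
  · show G.Adj (c (i + t)) (c (i + (t+1)))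
    have h1 : i + (t + 1) = (i + t) + 1 := by omega
    rw [h1]
    exact hw.2 _ (by omega)
  · show c (i + 0) = c i
    rw [Nat.add_zero]
  · show c (i + (j - i)) = c j
    have h1 : i + (j - i) = j := by omega
    rw [h1]

/-- the complementary arc of a closed walk -/
lemma Rp.coarc {s : Finset V} {c : ℕ → V} {k : ℕ} (hw : IsWalkOn G s c k) (hcl : c k = c 0)
    {i j : ℕ} (hij : i ≤ j) (hj : j ≤ k) : Rp G s (c j) (c i) (k - j + i) := by
  have h1 : Rp G s (c j) (c 0) (k - j) := by
    have := Rp.arc hw hj le_rfl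
    rwa [hcl] at this
  have h2 : Rp G s (c 0) (c i) i := by
    have := Rp.arc hw (Nat.zero_le i) (le_trans hij hj)
    simpa using this
  exact h1.trans h2


variable (G) in
/-- `s` carries a closed odd walk -/
def HasOddCW (s : Finset V) : Prop := ∃ k, Odd k ∧ ∃ u, Rp G s u u k

section MinWalk

variable {s : Finset V} {c : ℕ → V} {ℓ : ℕ}
  (hw : IsWalkOn G s c ℓ) (hcl : c ℓ = c 0) (hodd : Odd ℓ)
  (hmin : ∀ j, Odd j → (∃ u, Rp G s u u j) → ℓ ≤ j)

include hw hcl hodd hmin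

lemma minwalk_ge_three : 3 ≤ ℓ := by
  rcases hodd with ⟨t, ht⟩
  rcases Nat.eq_zero_or_pos t with rfl | hpos
  · exfalso
    have := hw.2 0 (by omega)
    rw [(by omega : ℓ = 1)] at hcl
    rw [hcl] at this
    exact G.irrefl this
  · omega

lemma minwalk_inj : ∀ i j, i < j → j < ℓ → c i ≠ c j := by
  intro i j hij hj heq
  have h1 : Rp G s (c i) (c i) (j - i) := by
    have := Rp.arc (G := G) hw hij.le hj.le
    rwa [← heq] at this
  have h2 : Rp G s (c i) (c i) (ℓ - j + i) := by
    have := Rp.coarc (G := G) hw hcl hij.le hj.le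
    rwa [← heq] at this
  have hlodd : ℓ % 2 = 1 := Nat.odd_iff.mp hodd
  rcases Nat.even_or_odd (j - i) with he | ho
  · have ho2 : Odd (ℓ - j + i) := by
      rw [Nat.even_iff] at he; rw [Nat.odd_iff]; omega
    have := hmin _ ho2 ⟨_, h2⟩
    omega
  · have := hmin _ ho ⟨_, h1⟩
    omega

lemma minwalk_chord : ∀ i j, i < j → j < ℓ → G.Adj (c i) (c j) →
    j - i = 1 ∨ j - i = ℓ - 1 := by
  intro i j hij hj hadj
  have hci : c i ∈ s := hw.1 i (by omega)
  have hcj : c j ∈ s := hw.1 j (by omega)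
  have h1 : Rp G s (c i) (c i) ((j - i) + 1) :=
    (Rp.arc (G := G) hw hij.le hj.le).trans (Rp.edge hadj.symm hcj hci)
  have h2 : Rp G s (c j) (c j) ((ℓ - j + i) + 1) :=
    (Rp.coarc (G := G) hw hcl hij.le hj.le).trans (Rp.edge hadj hci hcj)
  have hlodd : ℓ % 2 = 1 := Nat.odd_iff.mp hodd
  rcases Nat.even_or_odd (j - i) with he | ho
  · rw [Nat.even_iff] at he
    have ho1 : Odd ((j - i) + 1) := by rw [Nat.odd_iff]; omega
    have := hmin _ ho1 ⟨_, h1⟩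
    omega
  · rw [Nat.odd_iff] at ho
    have ho2 : Odd ((ℓ - j + i) + 1) := by rw [Nat.odd_iff]; omega
    have := hmin _ ho2 ⟨_, h2⟩
    omega

lemma minwalk_ext : ∀ (v : V), v ∈ s → ∀ i j, i < j → j < ℓ →
    G.Adj v (c i) → G.Adj v (c j) → j - i = 2 ∨ j - i = ℓ - 2 := by
  intro v hv i j hij hj havi havj
  have hci : c i ∈ s := hw.1 i (by omega)
  have hcj : c j ∈ s := hw.1 j (by omega)
  have h1 : Rp G s v v (1 + (j - i) + 1) :=
    ((Rp.edge havi hv hci).trans (Rp.arc (G := G) hw hij.le hj.le)).trans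
      (Rp.edge havj.symm hcj hv)
  have h2 : Rp G s v v (1 + (ℓ - j + i) + 1) :=
    ((Rp.edge havj hv hcj).trans (Rp.coarc (G := G) hw hcl hij.le hj.le)).trans
      (Rp.edge havi.symm hci hv)
  have hlodd : ℓ % 2 = 1 := Nat.odd_iff.mp hodd
  rcases Nat.even_or_odd (j - i) with he | ho
  · rw [Nat.even_iff] at he
    have ho2 : Odd (1 + (ℓ - j + i) + 1) := by rw [Nat.odd_iff]; omega
    have := hmin _ ho2 ⟨_, h2⟩
    omega
  · rw [Nat.odd_iff] at ho
    have ho1 : Odd (1 + (j - i) + 1) := by rw [Nat.odd_iff]; omega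
    have := hmin _ ho1 ⟨_, h1⟩
    omega

lemma minwalk_no_three (h5 : 5 ≤ ℓ) : ∀ (v : V), v ∈ s → ∀ i j k,
    i < j → j < k → k < ℓ → G.Adj v (c i) → G.Adj v (c j) → G.Adj v (c k) → False := by
  intro v hv i j k hij hjk hk hi' hj' hk'
  have d1 := minwalk_ext hw hcl hodd hmin v hv i j hij (by omega) hi' hj'
  have d2 := minwalk_ext hw hcl hodd hmin v hv j k hjk hk hj' hk'
  have d3 := minwalk_ext hw hcl hodd hmin v hv i k (by omega) hk hi' hk'
  have hlodd : ℓ % 2 = 1 := Nat.odd_iff.mp hodd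
  omega

end MinWalk

section MinWalk2

variable {s : Finset V} {c : ℕ → V} {ℓ : ℕ}

/-- triangle gives a closed odd walk of length 3 -/
lemma triangle_walk {x y z : V} (hx : x ∈ s) (hy : y ∈ s) (hz : z ∈ s)
    (hxy : G.Adj x y) (hyz : G.Adj y z) (hxz : G.Adj x z) : Rp G s x x 3 := by
  have h := ((Rp.edge hxy hx hy).trans (Rp.edge hyz hy hz)).trans (Rp.edge hxz.symm hz hx)
  norm_num at h
  exact h

variable (hw : IsWalkOn G s c ℓ) (hcl : c ℓ = c 0) (hodd : Odd ℓ)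
  (hmin : ∀ j, Odd j → (∃ u, Rp G s u u j) → ℓ ≤ j) (h5 : 5 ≤ ℓ)

include hw hcl hodd hmin h5

lemma minwalk_trifree : TriFreeOn (G := G) s := by
  intro x hx y hy z hz hxy hyz hxz
  have hodd3 : Odd 3 := Nat.odd_iff.mpr rfl
  have h3 := hmin 3 hodd3 ⟨x, triangle_walk hx hy hz hxy hyz hxz⟩
  omega

/-- the odd girth (≥5) bound: `e(s) ≤ ⌊(|s|-1)²/4⌋ + 1` (doubled form) -/
lemma oddgirth_bound : DD G s ≤ 2 * ((s.card - 1)^2/4 + 1) := by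
  classical
  set Cs : Finset V := (Finset.range ℓ).image c with hCs
  have hinj : Set.InjOn c (Finset.range ℓ) := by
    intro i hi j hj heq
    simp only [Finset.coe_range, Set.mem_Iio] at hi hj
    by_contra hne
    rcases Nat.lt_or_ge i j with h | h
    · exact minwalk_inj hw hcl hodd hmin i j h hj heq
    · exact minwalk_inj hw hcl hodd hmin j i (by omega) hi heq.symm
  have hCcard : Cs.card = ℓ := by
    rw [hCs, Finset.card_image_of_injOn hinj, Finset.card_range]
  have hCsub : Cs ⊆ s := by
    intro w hwmem
    rw [hCs, Finset.mem_image] at hwmem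
    obtain ⟨i, hi, rfl⟩ := hwmem
    exact hw.1 i (by simp at hi; omega)
  have hls : ℓ ≤ s.card := hCcard ▸ Finset.card_le_card hCsub
  -- external vertices have ≤ 2 neighbours on the cycle
  have hext : ∀ v ∈ s \ Cs, (nbr G Cs v).card ≤ 2 := by
    intro v hv
    rw [Finset.mem_sdiff] at hv
    by_contra hgt
    have h3 : 2 < (nbr G Cs v).card := by omega
    rw [Finset.two_lt_card_iff] at h3
    obtain ⟨a, b, d, ha, hb, hd, hab, had, hbd⟩ := h3
    rw [mem_nbr] at ha hb hd
    obtain ⟨ia, hia, rfl⟩ := Finset.mem_image.mp (hCs ▸ ha.1)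
    obtain ⟨ib, hib, rfl⟩ := Finset.mem_image.mp (hCs ▸ hb.1)
    obtain ⟨id, hid, rfl⟩ := Finset.mem_image.mp (hCs ▸ hd.1)
    rw [Finset.mem_range] at hia hib hid
    have hne1 : ia ≠ ib := fun h => hab (by rw [h])
    have hne2 : ia ≠ id := fun h => had (by rw [h])
    have hne3 : ib ≠ id := fun h => hbd (by rw [h])
    have H := minwalk_no_three hw hcl hodd hmin h5 v hv.1
    rcases Nat.lt_or_ge ia ib with h1 | h1 <;> rcases Nat.lt_or_ge ib id with h2 | h2 <;>
      rcases Nat.lt_or_ge ia id with h3 | h3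
    · exact H ia ib id h1 h2 hid ha.2 hb.2 hd.2
    · omega
    · exact H ia id ib h3 (by omega) hib ha.2 hd.2 hb.2
    · exact H id ia ib (by omega) h1 hib hd.2 ha.2 hb.2
    · exact H ib ia id (by omega) h3 hid hb.2 ha.2 hd.2
    · exact H ib id ia h2 (by omega) hia hb.2 hd.2 ha.2
    · omega
    · exact H id ib ia (by omega) (by omega) hia hd.2 hb.2 ha.2
  -- cycle vertices have ≤ 2 neighbours on the cycle
  have hint : ∀ w ∈ Cs, (nbr G Cs w).card ≤ 2 := by
    intro w hwmem
    obtain ⟨t, ht, rfl⟩ := Finset.mem_image.mp (hCs ▸ hwmem)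
    rw [Finset.mem_range] at ht
    have hsub : nbr G Cs (c t) ⊆
        {c (if t + 1 = ℓ then 0 else t + 1), c (if t = 0 then ℓ - 1 else t - 1)} := by
      intro w hw2
      rw [mem_nbr] at hw2
      obtain ⟨u, hu, rfl⟩ := Finset.mem_image.mp (hCs ▸ hw2.1)
      rw [Finset.mem_range] at hu
      simp only [Finset.mem_insert, Finset.mem_singleton]
      rcases Nat.lt_trichotomy t u with h | h | h
      · rcases minwalk_chord hw hcl hodd hmin t u h hu hw2.2 with h1 | h1
        · left; congr 1; split <;> omega
        · right; congr 1; split <;> omega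
      · exfalso; rw [h] at hw2; exact G.irrefl hw2.2
      · rcases minwalk_chord hw hcl hodd hmin u t h ht hw2.2.symm with h1 | h1
        · right; congr 1; split <;> omega
        · left; congr 1; split <;> omega
    calc (nbr G Cs (c t)).card ≤ _ := Finset.card_le_card hsub
      _ ≤ 2 := Finset.card_insert_le _ _ |>.trans (by simp)
  -- assemble
  have hsplit := DD_split (G := G) hCsub
  have htf : TriFreeOn (G := G) (s \ Cs) := by
    have := minwalk_trifree hw hcl hodd hmin h5
    intro x hx y hy z hz
    exact this x (Finset.sdiff_subset hx) y (Finset.sdiff_subset hy) z (Finset.sdiff_subset hz)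
  have hmant := mantel_on (G := G) (s \ Cs).card (s \ Cs) le_rfl htf
  have hcross : ecnt G Cs (s \ Cs) ≤ 2 * (s.card - ℓ) := by
    rw [ecnt_comm, ecnt_eq_sum]
    calc ∑ v ∈ s \ Cs, (nbr G Cs v).card ≤ ∑ _v ∈ s \ Cs, 2 :=
          Finset.sum_le_sum (fun v hv => hext v hv)
      _ = (s \ Cs).card * 2 := by rw [Finset.sum_const, smul_eq_mul]
      _ = 2 * (s.card - ℓ) := by
          rw [Finset.card_sdiff_of_subset hCsub, hCcard]; ring
  have hDDC : DD G Cs ≤ 2 * ℓ := by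
    rw [DD, ecnt_eq_sum]
    calc ∑ v ∈ Cs, (nbr G Cs v).card ≤ ∑ _v ∈ Cs, 2 :=
          Finset.sum_le_sum (fun v hv => hint v hv)
      _ = Cs.card * 2 := by rw [Finset.sum_const, smul_eq_mul]
      _ = 2 * ℓ := by rw [hCcard]; ring
  have hsd : (s \ Cs).card = s.card - ℓ := by rw [Finset.card_sdiff_of_subset hCsub, hCcard]
  rw [hsd] at hmant
  -- arithmetic
  obtain ⟨k, hk⟩ := hodd
  have hk2 : 2 ≤ k := by omega
  have hka : 2 * k ≤ s.card - 1 := by omega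
  have har := cycle_arith (a := s.card - 1) (k := k) hk2 hka
  have hml : s.card - ℓ = (s.card - 1) - 2*k := by omega
  rw [hml] at hmant hcross
  omega

end MinWalk2

end Walks

/-- no odd closed walk gives a bipartition -/
lemma exists_bipartition : ∀ (s : Finset V), ¬ HasOddCW G s →
    ∃ P ⊆ s, (∀ u ∈ P, ∀ v ∈ P, ¬ G.Adj u v) ∧
      (∀ u ∈ s, u ∉ P → ∀ v ∈ s, v ∉ P → ¬ G.Adj u v) := by
  classical
  intro s
  induction s using Finset.strongInduction with
  | _ s ih =>
    intro hno
    rcases Finset.eq_empty_or_nonempty s with rfl | ⟨v₀, hv₀⟩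
    · exact ⟨∅, by simp⟩
    set Cmp : Finset V := s.filter (fun v => ∃ k, Rp G s v₀ v k) with hCmp
    have hv₀C : v₀ ∈ Cmp := by
      rw [hCmp, Finset.mem_filter]
      exact ⟨hv₀, 0, Rp.refl hv₀⟩
    have hCmpSub : Cmp ⊆ s := Finset.filter_subset _ _
    have hclosed : ∀ u ∈ Cmp, ∀ w ∈ s, G.Adj u w → w ∈ Cmp := by
      intro u hu w hws hadj
      rw [hCmp, Finset.mem_filter] at hu ⊢
      obtain ⟨hus, k, hk⟩ := hu
      exact ⟨hws, k + 1, hk.trans (Rp.edge hadj hus hws)⟩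
    have hssub : s \ Cmp ⊂ s := by
      refine Finset.sdiff_ssubset ?_ ⟨v₀, hv₀C⟩
      exact hCmpSub
    have hno' : ¬ HasOddCW G (s \ Cmp) := by
      intro ⟨k, hk, u, hu⟩
      exact hno ⟨k, hk, u, hu.mono (Finset.sdiff_subset)⟩
    obtain ⟨P₂, hP₂sub, hP₂int, hP₂ext⟩ := ih (s \ Cmp) hssub hno'
    set P₁ : Finset V := Cmp.filter (fun v => ∃ k, Even k ∧ Rp G s v₀ v k) with hP₁
    have hP₁sub : P₁ ⊆ Cmp := Finset.filter_subset _ _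
    refine ⟨P₁ ∪ P₂, ?_, ?_, ?_⟩
    · exact Finset.union_subset (hP₁sub.trans hCmpSub) (hP₂sub.trans Finset.sdiff_subset)
    · -- no edges inside P
      intro u hu v hv hadj
      rw [Finset.mem_union] at hu hv
      rcases hu with hu1 | hu2 <;> rcases hv with hv1 | hv2
      · -- both in P₁ : closed odd walk
        rw [hP₁, Finset.mem_filter] at hu1 hv1
        obtain ⟨huC, k1, hk1e, hk1⟩ := hu1
        obtain ⟨hvC, k2, hk2e, hk2⟩ := hv1
        have hclosedw : Rp G s v₀ v₀ (k1 + 1 + k2) :=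
          (hk1.trans (Rp.edge hadj (hCmpSub huC) (hCmpSub hvC))).trans hk2.symm
        refine hno ⟨k1 + 1 + k2, ?_, v₀, hclosedw⟩
        rw [Nat.even_iff] at hk1e hk2e
        rw [Nat.odd_iff]
        omega
      · -- u ∈ P₁ ⊆ Cmp, v ∈ P₂ ⊆ s \ Cmp : contradiction via hclosed
        have hvC := hclosed u (hP₁sub hu1) v (Finset.sdiff_subset (hP₂sub hv2)) hadj
        have := hP₂sub hv2
        rw [Finset.mem_sdiff] at this
        exact this.2 hvC
      · have huC := hclosed v (hP₁sub hv1) u (Finset.sdiff_subset (hP₂sub hu2)) hadj.symm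
        have := hP₂sub hu2
        rw [Finset.mem_sdiff] at this
        exact this.2 huC
      · exact hP₂int u hu2 v hv2 hadj
    · -- no edges inside s \ P
      intro u hus huP v hvs hvP hadj
      rw [Finset.mem_union] at huP hvP
      push_neg at huP hvP
      by_cases huC : u ∈ Cmp
      · -- u has an odd walk from v₀
        have hu1 : ∃ k, Rp G s v₀ u k := by
          rw [hCmp, Finset.mem_filter] at huC
          exact huC.2
        obtain ⟨k1, hk1⟩ := hu1
        have hk1odd : Odd k1 := by
          rcases Nat.even_or_odd k1 with he | ho
          · exfalso
            apply huP.1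
            rw [hP₁, Finset.mem_filter]
            exact ⟨huC, k1, he, hk1⟩
          · exact ho
        have hvC : v ∈ Cmp := hclosed u huC v hvs hadj
        have hv1 : ∃ k, Rp G s v₀ v k := by
          rw [hCmp, Finset.mem_filter] at hvC
          exact hvC.2
        obtain ⟨k2, hk2⟩ := hv1
        have hk2odd : Odd k2 := by
          rcases Nat.even_or_odd k2 with he | ho
          · exfalso
            apply hvP.1
            rw [hP₁, Finset.mem_filter]
            exact ⟨hvC, k2, he, hk2⟩
          · exact ho
        have hclosedw : Rp G s v₀ v₀ (k1 + 1 + k2) :=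
          (hk1.trans (Rp.edge hadj (hCmpSub huC) hvs)).trans hk2.symm
        refine hno ⟨k1 + 1 + k2, ?_, v₀, hclosedw⟩
        rw [Nat.odd_iff] at hk1odd hk2odd ⊢
        omega
      · by_cases hvC : v ∈ Cmp
        · exact huC (hclosed v hvC u hus hadj.symm)
        · -- both outside Cmp : use IH
          exact hP₂ext u (by rw [Finset.mem_sdiff]; exact ⟨hus, huC⟩) huP.2
            v (by rw [Finset.mem_sdiff]; exact ⟨hvs, hvC⟩) hvP.2 hadj



lemma pair_bound {r : ℕ}
    (hbk : ∀ u v, G.Adj u v → ∀ s : Finset V, ((nbr G s u) ∩ (nbr G s v)).card ≤ r)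
    {v w u3 : V} (hvw : G.Adj v w) (hvu : G.Adj v u3) (hwu : G.Adj w u3)
    {P : Finset V} (hu3 : u3 ∉ P) :
    (nbr G P v).card + (nbr G P w).card + 1 ≤ P.card + r := by
  have hbig := hbk v w hvw (insert u3 P)
  have hnotmem : u3 ∉ nbr G P v ∩ nbr G P w := by
    rw [Finset.mem_inter, mem_nbr]
    rintro ⟨⟨h, -⟩, -⟩
    exact hu3 h
  have hsub : insert u3 (nbr G P v ∩ nbr G P w) ⊆
      nbr G (insert u3 P) v ∩ nbr G (insert u3 P) w := by
    intro t ht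
    rw [Finset.mem_insert] at ht
    rw [Finset.mem_inter, mem_nbr, mem_nbr]
    rcases ht with rfl | ht
    · exact ⟨⟨Finset.mem_insert_self _ _, hvu⟩, Finset.mem_insert_self _ _, hwu⟩
    · rw [Finset.mem_inter, mem_nbr, mem_nbr] at ht
      exact ⟨⟨Finset.mem_insert_of_mem ht.1.1, ht.1.2⟩,
        Finset.mem_insert_of_mem ht.2.1, ht.2.2⟩
  have h1 := Finset.card_le_card hsub
  rw [Finset.card_insert_of_notMem hnotmem] at h1
  have h2 := Finset.card_union_add_card_inter (nbr G P v) (nbr G P w)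
  have h3 : (nbr G P v ∪ nbr G P w).card ≤ P.card :=
    Finset.card_le_card (Finset.union_subset nbr_subset nbr_subset)
  omega

lemma hole_bound {r : ℕ}
    (hbk : ∀ u v, G.Adj u v → ∀ s : Finset V, ((nbr G s u) ∩ (nbr G s v)).card ≤ r)
    {v : V} {P Q : Finset V} :
    (nbr G P v).card * (nbr G Q v).card ≤ (nbr G P v).card * r
      + (P.card * Q.card - ecnt G P Q) := by
  -- pointwise : for p ∈ nbr P v, q_v ≤ r + (Q.card - deg_Q p)
  have hpoint : ∀ p ∈ nbr G P v,
      (nbr G Q v).card ≤ r + (Q.card - (nbr G Q p).card) := by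
    intro p hp
    rw [mem_nbr] at hp
    have hsub : nbr G Q v ⊆ (nbr G Q v ∩ nbr G Q p) ∪ (Q \ nbr G Q p) := by
      intro t ht
      rw [Finset.mem_union, Finset.mem_inter, Finset.mem_sdiff]
      by_cases htp : t ∈ nbr G Q p
      · exact Or.inl ⟨ht, htp⟩
      · exact Or.inr ⟨(mem_nbr.mp ht).1, htp⟩
    have h1 := Finset.card_le_card hsub
    have h2 := Finset.card_union_le (nbr G Q v ∩ nbr G Q p) (Q \ nbr G Q p)
    have h3 := hbk v p hp.2 Q
    have h4 : (Q \ nbr G Q p).card = Q.card - (nbr G Q p).card :=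
      Finset.card_sdiff_of_subset nbr_subset
    omega
  have hsum : ∑ p ∈ nbr G P v, (nbr G Q v).card
      ≤ ∑ p ∈ nbr G P v, (r + (Q.card - (nbr G Q p).card)) :=
    Finset.sum_le_sum hpoint
  rw [Finset.sum_const, smul_eq_mul, Finset.sum_add_distrib, Finset.sum_const, smul_eq_mul] at hsum
  have hmono : ∑ p ∈ nbr G P v, (Q.card - (nbr G Q p).card)
      ≤ ∑ p ∈ P, (Q.card - (nbr G Q p).card) :=
    Finset.sum_le_sum_of_subset_of_nonneg nbr_subset (fun _ _ _ => Nat.zero_le _)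
  have htotal : ecnt G P Q + ∑ p ∈ P, (Q.card - (nbr G Q p).card) = P.card * Q.card := by
    rw [ecnt_eq_sum, ← Finset.sum_add_distrib]
    have : ∀ p ∈ P, (nbr G Q p).card + (Q.card - (nbr G Q p).card) = Q.card := by
      intro p _
      have := card_nbr_le (s := Q) (G := G) p
      omega
    rw [Finset.sum_congr rfl this, Finset.sum_const, smul_eq_mul, mul_comm]
  omega

lemma huge_zero {r μ p q : ℕ} (h : p * q ≤ q * r + μ) (hp : r + μ + 1 ≤ p) : q = 0 := by
  by_contra hq
  have hq1 : 1 ≤ q := by omega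
  have h1 : (r + μ + 1) * q ≤ p * q := Nat.mul_le_mul_right _ hp
  have h2 : (r + μ + 1) * q = q * r + (μ * q + q) := by ring
  have h3 : μ ≤ μ * q := Nat.le_mul_of_pos_right _ (by omega)
  omega

/-- The endgame: a triangle glued to a bipartite graph. -/
lemma endgame {r : ℕ}
    (hbk : ∀ u v, G.Adj u v → ∀ s : Finset V, ((nbr G s u) ∩ (nbr G s v)).card ≤ r)
    {x y z : V} {P Q : Finset V}
    (hxy : G.Adj x y) (hyz : G.Adj y z) (hxz : G.Adj x z)
    (hxP : x ∉ P) (hxQ : x ∉ Q) (hyP : y ∉ P) (hyQ : y ∉ Q) (hzP : z ∉ P) (hzQ : z ∉ Q)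
    (hEH : (P.card + Q.card)^2/4 + 2 ≤ ecnt G P Q + r)
    (hbig : 20*r + 20 ≤ P.card + Q.card) :
    ecnt G P Q + ((nbr G P x).card + (nbr G Q x).card + (nbr G P y).card + (nbr G Q y).card
      + (nbr G P z).card + (nbr G Q z).card) + 3 ≤ (P.card+1)*(Q.card+1) + 2*r := by
  set a := P.card with ha
  set b := Q.card with hb
  set EH := ecnt G P Q with hEH0
  have hEHle : EH ≤ a * b := ecnt_le P Q
  set μ := a * b - EH with hμdef
  have hμ : μ + 2 ≤ r := by
    have := prod_le_quarter a b
    omega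
  -- balance bound : |a - b| ≤ r + μ - 1
  have hbal : a ≤ b + (r + μ) - 1 ∧ b ≤ a + (r + μ) - 1 := by
    have hq4 : (a+b)^2 ≤ 4*((a+b)^2/4) + 3 := by omega
    have hkey : (a+b)^2 + 4*μ ≤ 4*(a*b) + 4*r - 5 := by omega
    constructor
    · by_contra hcon
      push_neg at hcon
      have he : b + (r + μ) ≤ a := by omega
      obtain ⟨e, he2⟩ : ∃ e, a = b + e := ⟨a - b, by omega⟩
      have hid : (a + b)^2 = 4*(a*b) + e*e := by rw [he2]; ring
      have hee : (r + μ) * (r + μ) ≤ e * e := Nat.mul_le_mul (by omega) (by omega)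
      have hrr : 4 * r ≤ r * r + 4 := by nlinarith
      have hexp : (r + μ) * (r + μ) = r*r + 2*(r*μ) + μ*μ := by ring
      have h0 : μ ≤ r * μ := Nat.le_mul_of_pos_left _ (by omega)
      omega
    · by_contra hcon
      push_neg at hcon
      have he : a + (r + μ) ≤ b := by omega
      obtain ⟨e, he2⟩ : ∃ e, b = a + e := ⟨b - a, by omega⟩
      have hid : (a + b)^2 = 4*(a*b) + e*e := by rw [he2]; ring
      have hee : (r + μ) * (r + μ) ≤ e * e := Nat.mul_le_mul (by omega) (by omega)
      have hrr : 4 * r ≤ r * r + 4 := by nlinarith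
      have hexp : (r + μ) * (r + μ) = r*r + 2*(r*μ) + μ*μ := by ring
      have h0 : μ ≤ r * μ := Nat.le_mul_of_pos_left _ (by omega)
      omega
  -- the three vertices trichotomy
  have tri : ∀ v : V, ((nbr G P v).card ≤ r + μ ∧ (nbr G Q v).card ≤ r + μ)
      ∨ ((nbr G Q v).card = 0) ∨ ((nbr G P v).card = 0) := by
    intro v
    have h1 : (nbr G P v).card * (nbr G Q v).card ≤ (nbr G P v).card * r + μ := by
      have h := hole_bound hbk (v := v) (P := P) (Q := Q)
      rw [← ha, ← hb, ← hEH0] at h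
      omega
    have h2 : (nbr G Q v).card * (nbr G P v).card ≤ (nbr G Q v).card * r + μ := by
      have h := hole_bound hbk (v := v) (P := Q) (Q := P)
      have hcomm : ecnt G Q P = ecnt G P Q := by
        unfold ecnt
        rw [Finset.sum_comm]
        refine Finset.sum_congr rfl fun v1 _ => Finset.sum_congr rfl fun w1 _ => ?_
        simp [SimpleGraph.adj_comm]
      rw [hcomm, ← ha, ← hb, ← hEH0] at h
      have hc : b * a - EH = μ := by
        rw [hμdef, mul_comm]
      rw [hc] at h
      exact h
    by_cases hp : (nbr G P v).card ≤ r + μ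
    · by_cases hq : (nbr G Q v).card ≤ r + μ
      · exact Or.inl ⟨hp, hq⟩
      · refine Or.inr (Or.inr ?_)
        have := huge_zero (p := (nbr G Q v).card) (q := (nbr G P v).card) (r := r) (μ := μ)
          (by rw [mul_comm] at h1; omega) (by omega)
        exact this
    · refine Or.inr (Or.inl ?_)
      exact huge_zero (p := (nbr G P v).card) (q := (nbr G Q v).card) (r := r) (μ := μ)
        (by rw [mul_comm] at h2; omega) (by omega)
  -- pair bounds
  have pbxy := pair_bound hbk hxy hxz hyz hzP
  have pbxz := pair_bound hbk hxz hxy (G.adj_symm hyz) hyP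
  have pbyz := pair_bound hbk hyz (G.adj_symm hxy) (G.adj_symm hxz) hxP
  have qbxy := pair_bound hbk hxy hxz hyz hzQ
  have qbxz := pair_bound hbk hxz hxy (G.adj_symm hyz) hyQ
  have qbyz := pair_bound hbk hyz (G.adj_symm hxy) (G.adj_symm hxz) hxQ
  have cpx : (nbr G P x).card ≤ a := card_nbr_le x
  have cpy : (nbr G P y).card ≤ a := card_nbr_le y
  have cpz : (nbr G P z).card ≤ a := card_nbr_le z
  have cqx : (nbr G Q x).card ≤ b := card_nbr_le x
  have cqy : (nbr G Q y).card ≤ b := card_nbr_le y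
  have cqz : (nbr G Q z).card ≤ b := card_nbr_le z
  have habig : 6*r ≤ a ∧ 6*r ≤ b := by omega
  have hgoal : (a+1)*(b+1) = a*b + a + b + 1 := by ring
  rcases tri x with ⟨h1,h2⟩ | h1 | h1 <;> rcases tri y with ⟨h3,h4⟩ | h3 | h3 <;>
    rcases tri z with ⟨h5,h6⟩ | h5 | h5 <;> omega



lemma common_bound {r : ℕ}
    (hbk : ∀ u v, G.Adj u v → ∀ s : Finset V, ((nbr G s u) ∩ (nbr G s v)).card ≤ r)
    {v w u3 : V} (hvw : G.Adj v w) (hvu : G.Adj v u3) (hwu : G.Adj w u3)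
    {P : Finset V} (hu3 : u3 ∉ P) :
    (nbr G P v ∩ nbr G P w).card + 1 ≤ r := by
  have hbig := hbk v w hvw (insert u3 P)
  have hnotmem : u3 ∉ nbr G P v ∩ nbr G P w := by
    rw [Finset.mem_inter, mem_nbr]
    rintro ⟨⟨h, -⟩, -⟩
    exact hu3 h
  have hsub : insert u3 (nbr G P v ∩ nbr G P w) ⊆
      nbr G (insert u3 P) v ∩ nbr G (insert u3 P) w := by
    intro t ht
    rw [Finset.mem_insert] at ht
    rw [Finset.mem_inter, mem_nbr, mem_nbr]
    rcases ht with rfl | ht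
    · exact ⟨⟨Finset.mem_insert_self _ _, hvu⟩, Finset.mem_insert_self _ _, hwu⟩
    · rw [Finset.mem_inter, mem_nbr, mem_nbr] at ht
      exact ⟨⟨Finset.mem_insert_of_mem ht.1.1, ht.1.2⟩,
        Finset.mem_insert_of_mem ht.2.1, ht.2.2⟩
  have h1 := Finset.card_le_card hsub
  rw [Finset.card_insert_of_notMem hnotmem] at h1
  omega

/-- triangle attachment bound : `e(T, s∖T) ≤ (|s|-3) + 3(r-1)` -/
lemma attach_bound {r : ℕ}
    (hbk : ∀ u v, G.Adj u v → ∀ s : Finset V, ((nbr G s u) ∩ (nbr G s v)).card ≤ r)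
    {x y z : V} {s : Finset V} (hx : x ∈ s) (hy : y ∈ s) (hz : z ∈ s)
    (hxy : G.Adj x y) (hyz : G.Adj y z) (hxz : G.Adj x z) :
    ecnt G {x, y, z} (s \ {x, y, z}) + 6 ≤ s.card + 3 * r := by
  set T : Finset V := {x, y, z} with hT
  have hxyne : x ≠ y := G.ne_of_adj hxy
  have hxzne : x ≠ z := G.ne_of_adj hxz
  have hyzne : y ≠ z := G.ne_of_adj hyz
  have hTsub : T ⊆ s := by
    intro t ht
    rw [hT] at ht
    simp only [Finset.mem_insert, Finset.mem_singleton] at ht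
    rcases ht with rfl | rfl | rfl <;> assumption
  have hTcard : T.card = 3 := by
    rw [hT, Finset.card_insert_of_notMem (by simp [hxyne, hxzne]),
      Finset.card_insert_of_notMem (by simp [hyzne]), Finset.card_singleton]
  set E : Finset V := s \ T with hE
  -- pointwise bound
  have hpt : ∀ w ∈ E, (nbr G T w).card ≤ 1
      + ((if G.Adj x w ∧ G.Adj y w then 1 else 0)
        + (if G.Adj x w ∧ G.Adj z w then 1 else 0)
        + (if G.Adj y w ∧ G.Adj z w then 1 else 0)) := by
    intro w hw
    have hcard : (nbr G T w).card
        = (if G.Adj w x then 1 else 0) + ((if G.Adj w y then 1 else 0)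
          + (if G.Adj w z then 1 else 0)) := by
      rw [hT, nbr, Finset.filter_insert, Finset.filter_insert, Finset.filter_singleton]
      split <;> split <;> split <;>
        simp_all [Finset.card_insert_of_notMem, hxyne, hxzne, hyzne]
    rw [hcard]
    have c1 := G.adj_comm w x
    have c2 := G.adj_comm w y
    have c3 := G.adj_comm w z
    by_cases h1 : G.Adj x w <;> by_cases h2 : G.Adj y w <;> by_cases h3 : G.Adj z w <;>
      simp [h1, h2, h3, c1, c2, c3]
  -- rewrite indicator sums as intersection cardinalities
  have h2 : ∀ (u1 u2 : V), (∑ w ∈ E, if G.Adj u1 w ∧ G.Adj u2 w then 1 else 0)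
      = (nbr G E u1 ∩ nbr G E u2).card := by
    intro u1 u2
    have he : nbr G E u1 ∩ nbr G E u2 = E.filter (fun w => G.Adj u1 w ∧ G.Adj u2 w) := by
      ext t
      simp only [Finset.mem_inter, mem_nbr, Finset.mem_filter]
      tauto
    rw [he, Finset.card_filter]
  have hsum : ecnt G T E ≤ E.card
      + ((nbr G E x ∩ nbr G E y).card + (nbr G E x ∩ nbr G E z).card
        + (nbr G E y ∩ nbr G E z).card) := by
    rw [ecnt_comm, ecnt_eq_sum]
    calc ∑ w ∈ E, (nbr G T w).card
        ≤ ∑ w ∈ E, (1 + ((if G.Adj x w ∧ G.Adj y w then 1 else 0)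
          + (if G.Adj x w ∧ G.Adj z w then 1 else 0)
          + (if G.Adj y w ∧ G.Adj z w then 1 else 0))) := Finset.sum_le_sum hpt
      _ = E.card + ((∑ w ∈ E, if G.Adj x w ∧ G.Adj y w then 1 else 0)
          + (∑ w ∈ E, if G.Adj x w ∧ G.Adj z w then 1 else 0)
          + (∑ w ∈ E, if G.Adj y w ∧ G.Adj z w then 1 else 0)) := by
          rw [Finset.sum_add_distrib, Finset.sum_add_distrib, Finset.sum_add_distrib,
            Finset.sum_const, smul_eq_mul, mul_one]
      _ = _ := by rw [h2, h2, h2]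
  -- each intersection is ≤ r - 1
  have hzE : z ∉ E := by rw [hE]; simp [hT]
  have hyE : y ∉ E := by rw [hE]; simp [hT]
  have hxE : x ∉ E := by rw [hE]; simp [hT]
  have hb1 := common_bound hbk hxy hxz hyz hzE
  have hb2 := common_bound hbk hxz hxy (G.adj_symm hyz) hyE
  have hb3 := common_bound hbk hyz (G.adj_symm hxy) (G.adj_symm hxz) hxE
  have hEcard : E.card = s.card - 3 := by rw [hE, Finset.card_sdiff_of_subset hTsub, hTcard]
  have h3le : 3 ≤ s.card := hTcard ▸ Finset.card_le_card hTsub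
  omega

/-- the stability lemma : a book-free graph with ≥ ⌊m²/4⌋ - (r-2) edges is bipartite -/
lemma stability {r : ℕ}
    (hbk : ∀ u v, G.Adj u v → ∀ s : Finset V, ((nbr G s u) ∩ (nbr G s v)).card ≤ r)
    {s : Finset V} (hN : 2*(6*r+6)^2 + 20*r + 20 ≤ s.card)
    (hdense : 2*(s.card^2/4) + 3 ≤ DD G s + 2*r) :
    ∃ P ⊆ s, (∀ u ∈ P, ∀ v ∈ P, ¬ G.Adj u v) ∧
      (∀ u ∈ s, u ∉ P → ∀ v ∈ s, v ∉ P → ¬ G.Adj u v) := by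
  classical
  by_contra hno
  have hodd : HasOddCW G s := by
    by_contra hcw
    exact hno (exists_bipartition s hcw)
  -- minimal odd closed walk
  have hex : ∃ k, Odd k ∧ ∃ u, Rp G s u u k := hodd
  set ℓ := Nat.find hex with hℓ
  obtain ⟨hℓodd, u, c, hw, hc0, hck⟩ := Nat.find_spec hex
  rw [← hℓ] at hℓodd hw hck
  have hcl : c ℓ = c 0 := by rw [hck, hc0]
  have hmin : ∀ j, Odd j → (∃ u, Rp G s u u j) → ℓ ≤ j := by
    intro j hj hu
    exact Nat.find_min' hex ⟨hj, hu⟩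
  have h3 := minwalk_ge_three hw hcl hℓodd hmin
  rcases Nat.lt_or_ge ℓ 5 with h5 | h5
  · -- ℓ = 3 : a triangle
    have hℓ3 : ℓ = 3 := by
      have := Nat.odd_iff.mp hℓodd
      omega
    rw [hℓ3] at hw hcl
    set x := c 0 with hxd
    set y := c 1 with hyd
    set z := c 2 with hzd
    have hxs : x ∈ s := hw.1 0 (by omega)
    have hys : y ∈ s := hw.1 1 (by omega)
    have hzs : z ∈ s := hw.1 2 (by omega)
    have hxy : G.Adj x y := hw.2 0 (by omega)
    have hyz : G.Adj y z := hw.2 1 (by omega)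
    have hxz : G.Adj x z := by
      have h := hw.2 2 (by omega)
      rw [hcl] at h
      exact h.symm
    set T : Finset V := {x, y, z} with hT
    have hTsub : T ⊆ s := by
      intro t ht
      rw [hT] at ht
      simp only [Finset.mem_insert, Finset.mem_singleton] at ht
      rcases ht with rfl | rfl | rfl <;> assumption
    have hTcard : T.card = 3 := by
      rw [hT, Finset.card_insert_of_notMem (by simp [G.ne_of_adj hxy, G.ne_of_adj hxz]),
        Finset.card_insert_of_notMem (by simp [G.ne_of_adj hyz]), Finset.card_singleton]
    have hsplit := DD_split (G := G) hTsub
    have hDDT6 : DD G T ≤ 9 := by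
      have h9 := ecnt_le (G := G) T T
      rw [hTcard] at h9
      have : DD G T = ecnt G T T := rfl
      omega
    have hatt := attach_bound hbk hxs hys hzs hxy hyz hxz
    rw [← hT] at hatt
    have heprime := eprime hbk (s \ T).card (s \ T) le_rfl
    have hsd : (s \ T).card = s.card - 3 := by rw [Finset.card_sdiff_of_subset hTsub, hTcard]
    rw [hsd] at heprime
    -- arithmetic contradiction
    have hq1 : (s.card - 1)^2/4 = (s.card - 3)^2/4 + (s.card - 2) := by
      have h := quarter_step (m := s.card - 1) (by omega)
      have e1 : s.card - 1 - 2 = s.card - 3 := by omega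
      have e2 : s.card - 1 - 1 = s.card - 2 := by omega
      rw [e1, e2] at h
      exact h
    have hq2 : s.card^2/4 = (s.card - 1)^2/4 + s.card/2 := quarter_step1 (by omega)
    omega
  · -- odd girth ≥ 5
    have := oddgirth_bound hw hcl hℓodd hmin h5
    have hq2 : s.card^2/4 = (s.card - 1)^2/4 + s.card/2 := quarter_step1 (by omega)
    omega

/-- Main upper bound : non-bipartite book-free graph on `s` has at most
`⌊(|s|-1)²/4⌋ + 2r` edges (doubled form). -/
lemma main_bound {r : ℕ} (hr : 1 ≤ r)
    (hbk : ∀ u v, G.Adj u v → ∀ s : Finset V, ((nbr G s u) ∩ (nbr G s v)).card ≤ r)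
    {s : Finset V} (hN : 2*(6*r+6)^2 + 20*r + 60 ≤ s.card)
    (hodd : HasOddCW G s) :
    DD G s ≤ 2 * ((s.card - 1)^2/4 + 2*r) := by
  classical
  have hex : ∃ k, Odd k ∧ ∃ u, Rp G s u u k := hodd
  set ℓ := Nat.find hex with hℓ
  obtain ⟨hℓodd, u, c, hw, hc0, hck⟩ := Nat.find_spec hex
  rw [← hℓ] at hℓodd hw hck
  have hcl : c ℓ = c 0 := by rw [hck, hc0]
  have hmin : ∀ j, Odd j → (∃ u, Rp G s u u j) → ℓ ≤ j := by
    intro j hj hu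
    exact Nat.find_min' hex ⟨hj, hu⟩
  have h3 := minwalk_ge_three hw hcl hℓodd hmin
  rcases Nat.lt_or_ge ℓ 5 with h5 | h5
  swap
  · -- odd girth ≥ 5 : triangle-free bound suffices
    have := oddgirth_bound hw hcl hℓodd hmin h5
    omega
  -- ℓ = 3 : triangle
  have hℓ3 : ℓ = 3 := by
    have := Nat.odd_iff.mp hℓodd
    omega
  rw [hℓ3] at hw hcl
  set x := c 0 with hxd
  set y := c 1 with hyd
  set z := c 2 with hzd
  have hxs : x ∈ s := hw.1 0 (by omega)
  have hys : y ∈ s := hw.1 1 (by omega)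
  have hzs : z ∈ s := hw.1 2 (by omega)
  have hxy : G.Adj x y := hw.2 0 (by omega)
  have hyz : G.Adj y z := hw.2 1 (by omega)
  have hxz : G.Adj x z := by
    have h := hw.2 2 (by omega)
    rw [hcl] at h
    exact h.symm
  set T : Finset V := {x, y, z} with hT
  have hTsub : T ⊆ s := by
    intro t ht
    rw [hT] at ht
    simp only [Finset.mem_insert, Finset.mem_singleton] at ht
    rcases ht with rfl | rfl | rfl <;> assumption
  have hTcard : T.card = 3 := by
    rw [hT, Finset.card_insert_of_notMem (by simp [G.ne_of_adj hxy, G.ne_of_adj hxz]),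
      Finset.card_insert_of_notMem (by simp [G.ne_of_adj hyz]), Finset.card_singleton]
  by_contra hcon
  push_neg at hcon
  have hsplit := DD_split (G := G) hTsub
  have hDDT6 : DD G T ≤ 6 := by
    have hrw : DD G T = ∑ v ∈ T, (nbr G T v).card := ecnt_eq_sum T T
    rw [hrw]
    have hpt : ∀ v ∈ T, (nbr G T v).card ≤ 2 := by
      intro v hv
      have hsub2 : nbr G T v ⊆ T.erase v := by
        intro w hw2
        rw [mem_nbr] at hw2
        rw [Finset.mem_erase]
        exact ⟨fun h => G.irrefl (h ▸ hw2.2), hw2.1⟩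
      have := Finset.card_le_card hsub2
      rw [Finset.card_erase_of_mem hv, hTcard] at this
      omega
    calc ∑ v ∈ T, (nbr G T v).card ≤ ∑ _v ∈ T, 2 := Finset.sum_le_sum hpt
      _ = 6 := by rw [Finset.sum_const, smul_eq_mul, hTcard]
  have hatt := attach_bound hbk hxs hys hzs hxy hyz hxz
  rw [← hT] at hatt
  have hsd : (s \ T).card = s.card - 3 := by rw [Finset.card_sdiff_of_subset hTsub, hTcard]
  have hq1 : (s.card - 1)^2/4 = (s.card - 3)^2/4 + (s.card - 2) := by
    have h := quarter_step (m := s.card - 1) (by omega)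
    have e1 : s.card - 1 - 2 = s.card - 3 := by omega
    have e2 : s.card - 1 - 1 = s.card - 2 := by omega
    rw [e1, e2] at h
    exact h
  -- the defect bound for the rest
  have hdense : 2*((s \ T).card^2/4) + 3 ≤ DD G (s \ T) + 2*r := by
    rw [hsd]
    omega
  obtain ⟨P, hPsub, hPint, hPext⟩ := stability hbk (s := s \ T) (by omega) hdense
  set Q : Finset V := (s \ T) \ P with hQ
  have hQsub : Q ⊆ s \ T := Finset.sdiff_subset
  -- DD of the rest is twice the cross count
  have hDDrest : DD G (s \ T) = 2 * ecnt G P Q := by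
    have hs2 := DD_split (G := G) hPsub
    have z1 : DD G ((s \ T) \ P) = 0 := by
      apply DD_eq_zero
      intro a ha b hb
      rw [hQ] at *
      rw [Finset.mem_sdiff] at ha hb
      exact hPext a ha.1 ha.2 b hb.1 hb.2
    have z2 : DD G P = 0 := DD_eq_zero (fun a ha b hb => hPint a ha b hb)
    have hecc : ecnt G P ((s \ T) \ P) = ecnt G P Q := by rw [hQ]
    omega
  have hcards : P.card + Q.card = s.card - 3 := by
    rw [hQ, Finset.card_sdiff_of_subset hPsub, hsd]
    have := Finset.card_le_card hPsub
    rw [hsd] at this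
    omega
  -- endgame hypotheses
  have hxT : x ∈ T := by rw [hT]; simp
  have hyT : y ∈ T := by rw [hT]; simp
  have hzT : z ∈ T := by rw [hT]; simp
  have hxP : x ∉ P := fun h => by
    have := hPsub h; rw [Finset.mem_sdiff] at this; exact this.2 hxT
  have hyP : y ∉ P := fun h => by
    have := hPsub h; rw [Finset.mem_sdiff] at this; exact this.2 hyT
  have hzP : z ∉ P := fun h => by
    have := hPsub h; rw [Finset.mem_sdiff] at this; exact this.2 hzT
  have hxQ : x ∉ Q := fun h => by
    have := hQsub h; rw [Finset.mem_sdiff] at this; exact this.2 hxT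
  have hyQ : y ∉ Q := fun h => by
    have := hQsub h; rw [Finset.mem_sdiff] at this; exact this.2 hyT
  have hzQ : z ∉ Q := fun h => by
    have := hQsub h; rw [Finset.mem_sdiff] at this; exact this.2 hzT
  have hEH : (P.card + Q.card)^2/4 + 2 ≤ ecnt G P Q + r := by
    rw [hcards]
    omega
  have hbig : 20*r + 20 ≤ P.card + Q.card := by omega
  have hend := endgame hbk hxy hyz hxz hxP hxQ hyP hyQ hzP hzQ hEH hbig
  -- relate attach counts
  have hPQunion : P ∪ Q = s \ T := by
    rw [hQ, Finset.union_sdiff_of_subset hPsub]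
  have hPQdisj : Disjoint P Q := by
    rw [hQ]
    exact Finset.disjoint_sdiff
  have hattach : ecnt G T (s \ T) = (nbr G P x).card + (nbr G Q x).card
      + (nbr G P y).card + (nbr G Q y).card + (nbr G P z).card + (nbr G Q z).card := by
    have hnbru : ∀ v : V, (nbr G (s \ T) v).card = (nbr G P v).card + (nbr G Q v).card := by
      intro v
      rw [← hPQunion]
      have : nbr G (P ∪ Q) v = nbr G P v ∪ nbr G Q v := by
        ext t
        simp only [mem_nbr, Finset.mem_union]
        tauto
      rw [this, Finset.card_union_of_disjoint]
      exact Finset.disjoint_filter_filter hPQdisj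
    rw [ecnt_eq_sum, hT]
    rw [Finset.sum_insert (by simp [G.ne_of_adj hxy, G.ne_of_adj hxz]),
      Finset.sum_insert (by simp [G.ne_of_adj hyz]), Finset.sum_singleton]
    rw [hnbru x, hnbru y, hnbru z]
    ring
  -- final assembly
  have hfin : (P.card + 1) * (Q.card + 1) ≤ ((P.card + 1) + (Q.card + 1))^2/4 :=
    prod_le_quarter _ _
  have hsum2 : (P.card + 1) + (Q.card + 1) = s.card - 1 := by omega
  rw [hsum2] at hfin
  -- DD s = 2*EH + 2*attach + DD T ≤ 2*((P+1)(Q+1) + 2r) ≤ target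
  omega


section Bridge
variable [Fintype V]

lemma bookfree_bridge {r : ℕ} (hbf : BookFree r G) :
    ∀ u v, G.Adj u v → ∀ s : Finset V, ((nbr G s u) ∩ (nbr G s v)).card ≤ r := by
  intro u v huv s
  have hsub : ((nbr G s u ∩ nbr G s v : Finset V) : Set V) ⊆ {w : V | G.Adj u w ∧ G.Adj v w} := by
    intro w hw
    simp only [Finset.coe_inter, Set.mem_inter_iff, Finset.mem_coe, mem_nbr] at hw
    exact ⟨hw.1.2, hw.2.2⟩
  have hfin : ({w : V | G.Adj u w ∧ G.Adj v w}).Finite := Set.toFinite _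
  calc ((nbr G s u) ∩ (nbr G s v)).card
      = ((nbr G s u ∩ nbr G s v : Finset V) : Set V).ncard := (Set.ncard_coe_finset _).symm
    _ ≤ ({w : V | G.Adj u w ∧ G.Adj v w}).ncard := Set.ncard_le_ncard hsub hfin
    _ ≤ r := hbf u v huv

lemma DD_univ_eq : DD G Finset.univ = 2 * G.edgeFinset.card := by
  rw [← SimpleGraph.sum_degrees_eq_twice_card_edges]
  rw [DD, ecnt_eq_sum]
  refine Finset.sum_congr rfl fun v _ => ?_
  rw [SimpleGraph.degree]
  congr 1
  ext w
  rw [mem_nbr, SimpleGraph.mem_neighborFinset]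
  simp

lemma edge_ncard_eq : G.edgeSet.ncard = G.edgeFinset.card := by
  rw [← SimpleGraph.coe_edgeFinset, Set.ncard_coe_finset]

lemma hasOddCW_of_not_colorable (h : ¬ G.Colorable 2) : HasOddCW G Finset.univ := by
  by_contra hcw
  obtain ⟨P, _, hPint, hPext⟩ := exists_bipartition Finset.univ hcw
  apply h
  classical
  refine ⟨SimpleGraph.Coloring.mk (fun v => if v ∈ P then 0 else 1) ?_⟩
  intro u v huv
  by_cases hu : u ∈ P <;> by_cases hv : v ∈ P
  · exact absurd huv (hPint u hu v hv)
  · simp [hu, hv]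
  · simp [hu, hv]
  · exact absurd huv (hPext u (Finset.mem_univ u) hu v (Finset.mem_univ v) hv)

/-- final upper bound, for a graph on `Fin n` -/
lemma upper_bound {r n : ℕ} (hr : 1 ≤ r) (hN : 2*(6*r+6)^2 + 20*r + 60 ≤ n)
    {G : SimpleGraph (Fin n)} (hcol : ¬ G.Colorable 2) (hbf : BookFree r G) :
    G.edgeSet.ncard ≤ (n - 1)^2/4 + 2*r := by
  classical
  haveI : DecidableRel G.Adj := Classical.decRel _
  have h1 := main_bound hr (bookfree_bridge hbf) (s := (Finset.univ : Finset (Fin n)))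
    (by simpa using hN) (hasOddCW_of_not_colorable hcol)
  rw [DD_univ_eq] at h1
  rw [edge_ncard_eq]
  have : (Finset.univ : Finset (Fin n)).card = n := by simp
  rw [this] at h1
  omega

end Bridge

/-- the extremal graph : complete bipartite `A–B` plus an apex `0` joined to
`r` vertices of `A` and `r` vertices of `B` -/
def exG (n a r : ℕ) : SimpleGraph (Fin n) where
  Adj u v := ((1 ≤ u.val ∧ u.val ≤ a) ∧ a < v.val) ∨ ((1 ≤ v.val ∧ v.val ≤ a) ∧ a < u.val)
    ∨ (u.val = 0 ∧ ((1 ≤ v.val ∧ v.val ≤ r) ∨ (a < v.val ∧ v.val ≤ a + r)))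
    ∨ (v.val = 0 ∧ ((1 ≤ u.val ∧ u.val ≤ r) ∨ (a < u.val ∧ u.val ≤ a + r)))
  symm := by constructor; intro u v h; tauto
  loopless := by constructor; intro v h; omega

instance (n a r : ℕ) : DecidableRel (exG n a r).Adj := fun u v =>
  inferInstanceAs (Decidable (_ ∨ _))

lemma exG_adj {n a r : ℕ} (u v : Fin n) : (exG n a r).Adj u v ↔
    ((1 ≤ u.val ∧ u.val ≤ a) ∧ a < v.val) ∨ ((1 ≤ v.val ∧ v.val ≤ a) ∧ a < u.val)
    ∨ (u.val = 0 ∧ ((1 ≤ v.val ∧ v.val ≤ r) ∨ (a < v.val ∧ v.val ≤ a + r)))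
    ∨ (v.val = 0 ∧ ((1 ≤ u.val ∧ u.val ≤ r) ∨ (a < u.val ∧ u.val ≤ a + r))) := Iff.rfl

/-- cardinality of a val-defined filter on `Fin n` -/
lemma fin_filter_card {n : ℕ} (p : ℕ → Prop) [DecidablePred p] :
    (Finset.univ.filter (fun w : Fin n => p w.val)).card = ((Finset.range n).filter p).card := by
  apply Finset.card_bij (fun w _ => w.val)
  · intro w hw
    rw [Finset.mem_filter] at hw ⊢
    exact ⟨Finset.mem_range.mpr w.isLt, hw.2⟩
  · intro w1 _ w2 _ h
    exact Fin.val_injective h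
  · intro i hi
    rw [Finset.mem_filter, Finset.mem_range] at hi
    exact ⟨⟨i, hi.1⟩, Finset.mem_filter.mpr ⟨Finset.mem_univ _, hi.2⟩, rfl⟩

lemma range_interval_card {n lo hi : ℕ} (h : hi ≤ n) :
    ((Finset.range n).filter (fun i => lo ≤ i ∧ i < hi)).card = hi - lo := by
  have : (Finset.range n).filter (fun i => lo ≤ i ∧ i < hi) = Finset.Ico lo hi := by
    ext i
    simp only [Finset.mem_filter, Finset.mem_range, Finset.mem_Ico]
    omega
  rw [this, Nat.card_Ico]

lemma fin_interval_card {n lo hi : ℕ} (h : hi ≤ n) :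
    (Finset.univ.filter (fun w : Fin n => lo ≤ w.val ∧ w.val < hi)).card = hi - lo := by
  rw [fin_filter_card (fun i => lo ≤ i ∧ i < hi), range_interval_card h]

/-- bound for sets of `Fin n` contained in a val-interval -/
lemma ncard_interval_le {n : ℕ} {S : Set (Fin n)} {lo c : ℕ}
    (h : ∀ w ∈ S, lo ≤ w.val ∧ w.val < lo + c) : S.ncard ≤ c := by
  classical
  have hsub : S ⊆ ((Finset.univ.filter (fun w : Fin n => lo ≤ w.val ∧ w.val < lo + c)) : Finset (Fin n)) := by
    intro w hw
    rw [Finset.coe_filter]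
    exact ⟨Finset.mem_univ _, h w hw⟩
  calc S.ncard ≤ _ := Set.ncard_le_ncard hsub (Set.toFinite _)
    _ = (Finset.univ.filter (fun w : Fin n => lo ≤ w.val ∧ w.val < lo + c)).card :=
        Set.ncard_coe_finset _
    _ = ((Finset.range n).filter (fun i => lo ≤ i ∧ i < lo + c)).card :=
        fin_filter_card (fun i => lo ≤ i ∧ i < lo + c)
    _ ≤ (Finset.Ico lo (lo + c)).card := by
        apply Finset.card_le_card
        intro i hi
        rw [Finset.mem_filter] at hi
        rw [Finset.mem_Ico]
        exact hi.2
    _ = c := by rw [Nat.card_Ico]; omega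

lemma sum_ite_const {n : ℕ} (p : Fin n → Prop) [DecidablePred p] (c : ℕ) :
    (∑ v : Fin n, if p v then c else 0) = (Finset.univ.filter p).card * c := by
  rw [Finset.sum_ite, Finset.sum_const, Finset.sum_const_zero, add_zero, smul_eq_mul]

lemma half_prod (m : ℕ) : (m - m/2) * (m/2) = m^2/4 := by
  obtain ⟨t, rfl | rfl⟩ := Nat.even_or_odd' m
  · have h1 : 2*t - 2*t/2 = t := by omega
    have h2 : (2*t)/2 = t := by omega
    rw [h1, h2]
    have h3 : (2*t)^2 = (t*t)*4 := by ring
    rw [h3, Nat.mul_div_cancel _ (by norm_num)]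
  · have h1 : (2*t+1) - (2*t+1)/2 = t+1 := by omega
    have h2 : (2*t+1)/2 = t := by omega
    rw [h1, h2]
    have h3 : (2*t+1)^2 = 4*((t+1)*t) + 1 := by ring
    rw [h3, Nat.mul_add_div (by norm_num)]
    simp



section ExG
variable {n a r : ℕ}

/-- the construction is not 2-colorable (it has a triangle) -/
lemma exG_not_colorable (hr : 1 ≤ r) (hra : r ≤ a) (han : a + 2 ≤ n) :
    ¬ (exG n a r).Colorable 2 := by
  rintro ⟨C⟩
  set x : Fin n := ⟨0, by omega⟩ with hx
  set y : Fin n := ⟨1, by omega⟩ with hy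
  set z : Fin n := ⟨a+1, by omega⟩ with hz
  have hxy : (exG n a r).Adj x y := by rw [exG_adj]; simp [hx, hy]; omega
  have hyz : (exG n a r).Adj y z := by rw [exG_adj]; simp [hy, hz]; omega
  have hxz : (exG n a r).Adj x z := by rw [exG_adj]; simp [hx, hz]; omega
  have h1 := C.valid hxy
  have h2 := C.valid hyz
  have h3 := C.valid hxz
  have v1 : (C x).val < 2 := (C x).isLt
  have v2 : (C y).val < 2 := (C y).isLt
  have v3 : (C z).val < 2 := (C z).isLt
  have e1 : (C x).val ≠ (C y).val := fun h => h1 (Fin.val_injective h)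
  have e2 : (C y).val ≠ (C z).val := fun h => h2 (Fin.val_injective h)
  have e3 : (C x).val ≠ (C z).val := fun h => h3 (Fin.val_injective h)
  omega

/-- the construction is book-free -/
lemma exG_bookfree (hr : 1 ≤ r) (hra : r ≤ a) : BookFree r (exG n a r) := by
  intro u v huv
  rw [exG_adj] at huv
  -- neighbourhood constraints
  have hA : ∀ (p w : Fin n), 1 ≤ p.val → p.val ≤ a → (exG n a r).Adj p w →
      a < w.val ∨ w.val = 0 := by
    intro p w h1 h2 hadj
    rw [exG_adj] at hadj
    omega
  have hB : ∀ (p w : Fin n), a < p.val → (exG n a r).Adj p w → w.val ≤ a := by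
    intro p w h1 hadj
    rw [exG_adj] at hadj
    omega
  have hO : ∀ (p w : Fin n), p.val = 0 → (exG n a r).Adj p w →
      ((1 ≤ w.val ∧ w.val ≤ r) ∨ (a < w.val ∧ w.val ≤ a + r)) := by
    intro p w h1 hadj
    rw [exG_adj] at hadj
    omega
  -- case analysis on the edge type
  rcases huv with ⟨hu, hv⟩ | ⟨hv, hu⟩ | ⟨hu, hv⟩ | ⟨hv, hu⟩
  · -- u ∈ A, v ∈ B : common nbrs ⊆ {0}
    apply le_trans (ncard_interval_le (lo := 0) (c := 1) ?_) hr
    intro w hw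
    obtain ⟨hw1, hw2⟩ := hw
    have := hA u w hu.1 hu.2 hw1
    have := hB v w hv hw2
    omega
  · -- u ∈ B, v ∈ A
    apply le_trans (ncard_interval_le (lo := 0) (c := 1) ?_) hr
    intro w hw
    obtain ⟨hw1, hw2⟩ := hw
    have := hA v w hv.1 hv.2 hw2
    have := hB u w hu hw1
    omega
  · -- u = 0, v ∈ S
    rcases hv with hv | hv
    · -- v ∈ S ∩ A : common ⊆ (a, a+r]
      apply ncard_interval_le (lo := a+1) (c := r)
      intro w hw
      obtain ⟨hw1, hw2⟩ := hw
      have h1 := hO u w hu hw1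
      have h2 := hA v w (by omega) (by omega) hw2
      omega
    · -- v ∈ S ∩ B : common ⊆ [1, r]
      apply ncard_interval_le (lo := 1) (c := r)
      intro w hw
      obtain ⟨hw1, hw2⟩ := hw
      have h1 := hO u w hu hw1
      have h2 := hB v w (by omega) hw2
      omega
  · -- v = 0, u ∈ S
    rcases hu with hu | hu
    · apply ncard_interval_le (lo := a+1) (c := r)
      intro w hw
      obtain ⟨hw1, hw2⟩ := hw
      have h1 := hO v w hv hw2
      have h2 := hA u w (by omega) (by omega) hw1
      omega
    · apply ncard_interval_le (lo := 1) (c := r)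
      intro w hw
      obtain ⟨hw1, hw2⟩ := hw
      have h1 := hO v w hv hw2
      have h2 := hB u w (by omega) hw1
      omega

end ExG

section ExGCount
variable {n a k r : ℕ}

lemma S_card (hak : a + k = n - 1) (hn : 1 ≤ n) (hrk : r ≤ k) (hka : k ≤ a) :
    (Finset.univ.filter (fun w : Fin n =>
      (1 ≤ w.val ∧ w.val ≤ r) ∨ (a < w.val ∧ w.val ≤ a + r))).card = 2*r := by
  rw [fin_filter_card (fun i => (1 ≤ i ∧ i ≤ r) ∨ (a < i ∧ i ≤ a + r))]
  have he : (Finset.range n).filter (fun i => (1 ≤ i ∧ i ≤ r) ∨ (a < i ∧ i ≤ a + r))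
      = Finset.Ico 1 (r+1) ∪ Finset.Ico (a+1) (a+r+1) := by
    ext i
    simp only [Finset.mem_filter, Finset.mem_range, Finset.mem_union, Finset.mem_Ico]
    omega
  rw [he, Finset.card_union_of_disjoint, Nat.card_Ico, Nat.card_Ico]
  · omega
  · rw [Finset.disjoint_left]
    intro i hi1 hi2
    rw [Finset.mem_Ico] at hi1 hi2
    omega

lemma exG_degree (hak : a + k = n - 1) (hn : 1 ≤ n) (hrk : r ≤ k) (hka : k ≤ a)
    (v : Fin n) : (exG n a r).degree v
    = (if v.val = 0 then 2*r else 0) + (if 1 ≤ v.val ∧ v.val ≤ a then k else 0)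
      + (if a < v.val then a else 0)
      + (if (1 ≤ v.val ∧ v.val ≤ r) ∨ (a < v.val ∧ v.val ≤ a + r) then 1 else 0) := by
  have hnb : (exG n a r).neighborFinset v = Finset.univ.filter ((exG n a r).Adj v) := by
    ext w
    rw [SimpleGraph.mem_neighborFinset, Finset.mem_filter]
    simp
  rw [SimpleGraph.degree, hnb]
  have hvn : v.val < n := v.isLt
  rcases (show v.val = 0 ∨ (1 ≤ v.val ∧ v.val ≤ a) ∨ a < v.val by omega) with hv | hv | hv
  · -- apex
    have hcongr : Finset.univ.filter ((exG n a r).Adj v)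
        = Finset.univ.filter (fun w : Fin n =>
            (1 ≤ w.val ∧ w.val ≤ r) ∨ (a < w.val ∧ w.val ≤ a + r)) := by
      apply Finset.filter_congr
      intro w _
      rw [exG_adj]
      omega
    rw [hcongr, S_card hak hn hrk hka]
    rw [if_pos hv, if_neg (by omega), if_neg (by omega), if_neg (by omega)]
    omega
  · -- v ∈ A
    by_cases hS : v.val ≤ r
    · have hcongr : Finset.univ.filter ((exG n a r).Adj v)
          = Finset.univ.filter (fun w : Fin n => a < w.val ∨ w.val = 0) := by
        apply Finset.filter_congr
        intro w _
        rw [exG_adj]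
        omega
      rw [hcongr, fin_filter_card (fun i => a < i ∨ i = 0)]
      have he : (Finset.range n).filter (fun i => a < i ∨ i = 0)
          = Finset.Ico (a+1) n ∪ Finset.Ico 0 1 := by
        ext i
        simp only [Finset.mem_filter, Finset.mem_range, Finset.mem_union, Finset.mem_Ico]
        omega
      rw [he, Finset.card_union_of_disjoint, Nat.card_Ico, Nat.card_Ico]
      · rw [if_neg (by omega), if_pos hv, if_neg (by omega), if_pos (by omega)]
        omega
      · rw [Finset.disjoint_left]
        intro i hi1 hi2
        rw [Finset.mem_Ico] at hi1 hi2
        omega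
    · have hcongr : Finset.univ.filter ((exG n a r).Adj v)
          = Finset.univ.filter (fun w : Fin n => a < w.val ∧ w.val < n) := by
        apply Finset.filter_congr
        intro w hw
        rw [exG_adj]
        have := w.isLt
        omega
      rw [hcongr, fin_filter_card (fun i => a < i ∧ i < n)]
      have he : (Finset.range n).filter (fun i => a < i ∧ i < n) = Finset.Ico (a+1) n := by
        ext i
        simp only [Finset.mem_filter, Finset.mem_range, Finset.mem_Ico]
        omega
      rw [he, Nat.card_Ico]
      rw [if_neg (by omega), if_pos hv, if_neg (by omega), if_neg (by omega)]
      omega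
  · -- v ∈ B
    by_cases hS : v.val ≤ a + r
    · have hcongr : Finset.univ.filter ((exG n a r).Adj v)
          = Finset.univ.filter (fun w : Fin n => w.val ≤ a) := by
        apply Finset.filter_congr
        intro w _
        rw [exG_adj]
        omega
      rw [hcongr, fin_filter_card (fun i => i ≤ a)]
      have he : (Finset.range n).filter (fun i => i ≤ a) = Finset.Ico 0 (a+1) := by
        ext i
        simp only [Finset.mem_filter, Finset.mem_range, Finset.mem_Ico]
        omega
      rw [he, Nat.card_Ico]
      rw [if_neg (by omega), if_neg (by omega), if_pos hv, if_pos (by omega)]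
      omega
    · have hcongr : Finset.univ.filter ((exG n a r).Adj v)
          = Finset.univ.filter (fun w : Fin n => 1 ≤ w.val ∧ w.val ≤ a) := by
        apply Finset.filter_congr
        intro w _
        rw [exG_adj]
        omega
      rw [hcongr, fin_filter_card (fun i => 1 ≤ i ∧ i ≤ a)]
      have he : (Finset.range n).filter (fun i => 1 ≤ i ∧ i ≤ a) = Finset.Ico 1 (a+1) := by
        ext i
        simp only [Finset.mem_filter, Finset.mem_range, Finset.mem_Ico]
        omega
      rw [he, Nat.card_Ico]
      rw [if_neg (by omega), if_neg (by omega), if_pos hv, if_neg (by omega)]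
      omega

/-- edge count of the construction -/
lemma exG_card (hak : a + k = n - 1) (hn : 1 ≤ n) (hrk : r ≤ k) (hka : k ≤ a) :
    (exG n a r).edgeFinset.card = a * k + 2 * r := by
  have hsum := SimpleGraph.sum_degrees_eq_twice_card_edges (exG n a r)
  have hdeg : ∑ v : Fin n, (exG n a r).degree v
      = ∑ v : Fin n, ((if v.val = 0 then 2*r else 0) + (if 1 ≤ v.val ∧ v.val ≤ a then k else 0)
        + (if a < v.val then a else 0)
        + (if (1 ≤ v.val ∧ v.val ≤ r) ∨ (a < v.val ∧ v.val ≤ a + r) then 1 else 0)) :=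
    Finset.sum_congr rfl fun v _ => exG_degree hak hn hrk hka v
  rw [hdeg] at hsum
  rw [Finset.sum_add_distrib, Finset.sum_add_distrib, Finset.sum_add_distrib] at hsum
  rw [sum_ite_const (fun v : Fin n => v.val = 0) (2*r),
    sum_ite_const (fun v : Fin n => 1 ≤ v.val ∧ v.val ≤ a) k,
    sum_ite_const (fun v : Fin n => a < v.val) a,
    sum_ite_const (fun v : Fin n => (1 ≤ v.val ∧ v.val ≤ r) ∨ (a < v.val ∧ v.val ≤ a + r)) 1,
    S_card hak hn hrk hka] at hsum
  have c1 : (Finset.univ.filter (fun v : Fin n => v.val = 0)).card = 1 := by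
    rw [fin_filter_card (fun i => i = 0)]
    have he : (Finset.range n).filter (fun i => i = 0) = Finset.Ico 0 1 := by
      ext i
      simp only [Finset.mem_filter, Finset.mem_range, Finset.mem_Ico]
      omega
    rw [he, Nat.card_Ico]
  have c2 : (Finset.univ.filter (fun v : Fin n => 1 ≤ v.val ∧ v.val ≤ a)).card = a := by
    rw [fin_filter_card (fun i => 1 ≤ i ∧ i ≤ a)]
    have he : (Finset.range n).filter (fun i => 1 ≤ i ∧ i ≤ a) = Finset.Ico 1 (a+1) := by
      ext i
      simp only [Finset.mem_filter, Finset.mem_range, Finset.mem_Ico]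
      omega
    rw [he, Nat.card_Ico]
    omega
  have c3 : (Finset.univ.filter (fun v : Fin n => a < v.val)).card = k := by
    rw [fin_filter_card (fun i => a < i)]
    have he : (Finset.range n).filter (fun i => a < i) = Finset.Ico (a+1) n := by
      ext i
      simp only [Finset.mem_filter, Finset.mem_range, Finset.mem_Ico]
      omega
    rw [he, Nat.card_Ico]
    omega
  rw [c1, c2, c3] at hsum
  have : 1 * (2*r) + a * k + k * a + 2*r*1 = 2 * (a * k + 2 * r) := by ring
  omega

end ExGCount


end BookProof

/-- For every integer `r ≥ 1` and all sufficiently large `n`, the maximum number of edges of a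
non-bipartite `B_{r+1}`-free simple graph on `n` vertices equals `⌊(n-1)²/4⌋ + 2r`. -/
theorem stmt_0 (r : ℕ) (hr : 1 ≤ r) :
    ∃ n₀ : ℕ, ∀ n : ℕ, n₀ ≤ n →
      IsGreatest {m : ℕ | ∃ G : SimpleGraph (Fin n),
          ¬ G.Colorable 2 ∧ BookFree r G ∧ G.edgeSet.ncard = m}
        ((n - 1) ^ 2 / 4 + 2 * r) := by
  refine ⟨2*(6*r+6)^2 + 20*r + 60, fun n hn => ?_⟩
  have hn3 : 2*r + 3 ≤ n := by nlinarith
  constructor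
  · -- membership : the construction
    set k : ℕ := (n-1)/2 with hk
    set a : ℕ := (n-1) - k with ha
    have hak : a + k = n - 1 := by omega
    have hrk : r ≤ k := by omega
    have hka : k ≤ a := by omega
    have hra : r ≤ a := by omega
    have han : a + 2 ≤ n := by omega
    have hn1 : 1 ≤ n := by omega
    refine ⟨BookProof.exG n a r, BookProof.exG_not_colorable hr hra han,
      BookProof.exG_bookfree hr hra, ?_⟩
    rw [BookProof.edge_ncard_eq, BookProof.exG_card hak hn1 hrk hka]
    have hprod : a * k = (n-1)^2/4 := by
      rw [ha, hk]
      exact BookProof.half_prod (n-1)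
    omega
  · -- maximality
    rintro m ⟨G, hcol, hbf, hcard⟩
    rw [← hcard]
    exact BookProof.upper_bound hr hn hcol hbf
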